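/- Under the conditions of the AIHT convergence theorem (with constants η > 0, b₁ = η/(1+η), b₂ = (C_ℓ-1)σ_M²b₁²/(C_ℓ(1-δ_{2ℓ-p})), assuming b₂/b₁² < 1 and 1+δ_{2ℓ-p} ≤ 1/μ < (1+√(1-b₂/b₁²))b₁(1-δ_{2ℓ-p}) and 1/μ ≤ σ_M²): if ‖y - Mx̂^{t-1}‖₂² ≤ η²‖e‖₂² then ‖y - Mx̂^t‖₂² ≤ η²‖e‖₂²; and if ‖y - Mx̂^{t-1}‖₂² > η²‖e‖₂² then ‖y - Mx̂^t‖₂² ≤ c₄‖y - Mx̂^{t-1}‖₂² where c₄ = (1+1/η)²(1/(μ(1-δ_{2ℓ-p})) - 1)C_ℓ + (C_ℓ-1)(μσ_M² - 1) + C_ℓ/η² < 1. -/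

import Mathlib

noncomputable section
open RealInnerProductSpace

abbrev Evec (d : ℕ) := EuclideanSpace ℝ (Fin d)

def nullSp {d p : ℕ} (Om : Evec d →L[ℝ] Evec p) (Λ : Finset (Fin p)) : Submodule ℝ (Evec d) where
  carrier := {x | ∀ i ∈ Λ, Om x i = 0}
  zero_mem' := by intro i _; simp
  add_mem' := by intro a b ha hb i hi; simp [ha i hi, hb i hi]
  smul_mem' := by intro c a ha i hi; simp [ha i hi]

def Qp {d p : ℕ} (Om : Evec d →L[ℝ] Evec p) (Λ : Finset (Fin p)) : Evec d →L[ℝ] Evec d :=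
  (nullSp Om Λ).subtypeL ∘L (nullSp Om Λ).orthogonalProjection

def Cosparse {d p : ℕ} (Om : Evec d →L[ℝ] Evec p) (ℓ : ℕ) (v : Evec d) : Prop :=
  ℓ ≤ {i : Fin p | Om v i = 0}.ncard

def ORIP {d m p : ℕ} (M : Evec d →L[ℝ] Evec m) (Om : Evec d →L[ℝ] Evec p) (ℓ : ℕ) (δ : ℝ) : Prop :=
  ∀ v : Evec d, Cosparse Om ℓ v →
    (1 - δ) * ‖v‖ ^ 2 ≤ ‖M v‖ ^ 2 ∧ ‖M v‖ ^ 2 ≤ (1 + δ) * ‖v‖ ^ 2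

lemma cosparse_mono {d p : ℕ} {Om : Evec d →L[ℝ] Evec p} {ℓ : ℕ} {u v : Evec d}
    (h : {i : Fin p | Om u i = 0} ⊆ {i : Fin p | Om v i = 0}) (hu : Cosparse Om ℓ u) :
    Cosparse Om ℓ v :=
  le_trans hu (Set.ncard_le_ncard h (Set.toFinite _))

lemma cosparse_sub {d p : ℕ} {Om : Evec d →L[ℝ] Evec p} {ℓ : ℕ} {u v : Evec d}
    (hu : Cosparse Om ℓ u) (hv : Cosparse Om ℓ v) : Cosparse Om (2 * ℓ - p) (u - v) := by
  set A := {i : Fin p | Om u i = 0}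
  set B := {i : Fin p | Om v i = 0}
  have hsub : A ∩ B ⊆ {i : Fin p | Om (u - v) i = 0} := by
    rintro i ⟨hiA, hiB⟩
    have h1 : Om u i = 0 := hiA
    have h2 : Om v i = 0 := hiB
    simp only [Set.mem_setOf_eq, map_sub]
    show Om u i - Om v i = 0
    rw [h1, h2, sub_zero]
  have hsum : (A ∩ B).ncard + (A ∪ B).ncard = A.ncard + B.ncard :=
    Set.ncard_inter_add_ncard_union A B
  have hup : (A ∪ B).ncard ≤ p := by
    have := Set.ncard_le_ncard (Set.subset_univ (A ∪ B)) (Set.toFinite _)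
    simpa [Set.ncard_univ] using this
  have hcard : 2 * ℓ - p ≤ (A ∩ B).ncard := by
    have hA : ℓ ≤ A.ncard := hu
    have hB : ℓ ≤ B.ncard := hv
    omega
  exact le_trans hcard (Set.ncard_le_ncard hsub (Set.toFinite _))

lemma Qp_mem {d p : ℕ} (Om : Evec d →L[ℝ] Evec p) (Λ : Finset (Fin p)) (z : Evec d) :
    ∀ i ∈ Λ, Om (Qp Om Λ z) i = 0 :=
  ((nullSp Om Λ).orthogonalProjection z).2

set_option maxHeartbeats 2000000 in
/-- One-step progress lemma for AIHT/AHTP under the conditions of the convergence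
theorem: either the residual stays below η²‖e‖², or it shrinks by a factor c₄ < 1. -/
theorem stmt8 {d m p ℓ : ℕ} (M : Evec d →L[ℝ] Evec m) (Om : Evec d →L[ℝ] Evec p)
    (x xprev xg xt : Evec d) (e y : Evec m) (S : Evec d → Finset (Fin p))
    (C δ μ η b₁ b₂ c₄ : ℝ)
    (hy : y = M x + e)
    (hx : Cosparse Om ℓ x)
    (hxprev : Cosparse Om ℓ xprev)
    (hScard : ∀ z : Evec d, ℓ ≤ (S z).card)
    (hSnear : ∀ z v : Evec d, Cosparse Om ℓ v →
      ‖z - Qp Om (S z) z‖ ^ 2 ≤ C * ‖z - v‖ ^ 2)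
    (hC : 1 ≤ C)
    (hrip : ORIP M Om (2 * ℓ - p) δ)
    (hδ0 : 0 ≤ δ) (hδ1 : δ < 1)
    (hη : 0 < η)
    (hb₁ : b₁ = η / (1 + η))
    (hb₂ : b₂ = (C - 1) * ‖M‖ ^ 2 * b₁ ^ 2 / (C * (1 - δ)))
    (hcond : b₂ / b₁ ^ 2 < 1)
    (hμ : 0 < μ)
    (hμ1 : 1 + δ ≤ 1 / μ)
    (hμ2 : 1 / μ < (1 + Real.sqrt (1 - b₂ / b₁ ^ 2)) * b₁ * (1 - δ))
    (hμ3 : 1 / μ ≤ ‖M‖ ^ 2)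
    (hxg : xg = xprev + μ • (ContinuousLinearMap.adjoint M) (y - M xprev))
    (hxt : xt = Qp Om (S xg) xg)
    (hc₄ : c₄ = (1 + 1 / η) ^ 2 * (1 / (μ * (1 - δ)) - 1) * C
        + (C - 1) * (μ * ‖M‖ ^ 2 - 1) + C / η ^ 2) :
    (‖y - M xprev‖ ^ 2 ≤ η ^ 2 * ‖e‖ ^ 2 → ‖y - M xt‖ ^ 2 ≤ η ^ 2 * ‖e‖ ^ 2) ∧
    (η ^ 2 * ‖e‖ ^ 2 < ‖y - M xprev‖ ^ 2 →
      ‖y - M xt‖ ^ 2 ≤ c₄ * ‖y - M xprev‖ ^ 2) ∧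
    c₄ < 1 := by
  -- abbreviations
  set σ2 : ℝ := ‖M‖ ^ 2 with hσ2
  set r : Evec m := y - M xprev with hr
  set g : Evec d := μ • (ContinuousLinearMap.adjoint M) r with hg
  have hδ' : (0:ℝ) < 1 - δ := by linarith
  have hC0 : (0:ℝ) < C := by linarith
  have hη2 : (0:ℝ) < η ^ 2 := by positivity
  -- key constants
  set a : ℝ := 1 / (μ * (1 - δ)) - 1 with ha
  clear_value σ2 r g a
  have hμinv : (1:ℝ) ≤ 1 / μ := by linarith
  have ha0 : 0 ≤ a := by
    rw [ha]
    have h1 : μ * (1 - δ) ≤ 1 := by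
      have hinv := (le_div_iff₀ hμ).1 hμ1
      have h0 : 0 ≤ μ * δ := by positivity
      nlinarith [hinv]
    have h2 : 0 < μ * (1 - δ) := by positivity
    have := (one_le_div h2).2 h1
    simpa using this
  have hσ2μ : 1 ≤ μ * σ2 := by
    have := (div_le_iff₀ hμ).1 hμ3
    linarith [mul_comm μ σ2]
  -- cosparsity of xt
  have hxtc : Cosparse Om ℓ xt := by
    have hsub : (↑(S xg) : Set (Fin p)) ⊆ {i : Fin p | Om xt i = 0} := by
      intro i hi
      exact hxt ▸ Qp_mem Om (S xg) xg i hi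
    calc ℓ ≤ (S xg).card := hScard xg
    _ = (↑(S xg) : Set (Fin p)).ncard := (Set.ncard_coe_finset _).symm
    _ ≤ _ := Set.ncard_le_ncard hsub (Set.toFinite _)
  -- the master inequality
  have hye : y - M x = e := by rw [hy]; abel
  have hMxx : M (x - xprev) = r - e := by
    rw [map_sub, hr, ← hye]; abel
  have hF : ∀ v : Evec d,
      ‖y - M v‖ ^ 2 = ‖r‖ ^ 2 - 2 * ⟪r, M (v - xprev)⟫ + ‖M (v - xprev)‖ ^ 2 := by
    intro v
    have h1 : y - M v = r - M (v - xprev) := by rw [hr, map_sub]; abel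
    rw [h1, norm_sub_sq_real]
  have hinner : ∀ w : Evec d, μ * ⟪r, M w⟫ = ⟪g, w⟫ := by
    intro w
    rw [hg, real_inner_smul_left, ContinuousLinearMap.adjoint_inner_left]
  -- RIP consequences
  have hripup : ‖M (xt - xprev)‖ ^ 2 ≤ (1 / μ) * ‖xt - xprev‖ ^ 2 := by
    have h := (hrip _ (cosparse_sub hxtc hxprev)).2
    have h2 := mul_le_mul_of_nonneg_right hμ1 (sq_nonneg ‖xt - xprev‖)
    linarith
  have hriplow : (1 - δ) * ‖x - xprev‖ ^ 2 ≤ ‖r - e‖ ^ 2 := by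
    have h := (hrip _ (cosparse_sub hx hxprev)).1
    rwa [hMxx] at h
  -- step 1: ‖y - M xt‖² ≤ ‖r‖² + (1/μ)(‖xt - xg‖² - ‖g‖²)
  have hstep1 : ‖y - M xt‖ ^ 2 ≤ ‖r‖ ^ 2 + (1 / μ) * (‖xt - xg‖ ^ 2 - ‖g‖ ^ 2) := by
    have hxtg : xt - xg = (xt - xprev) - g := by rw [hxg]; abel
    have hexp : ‖xt - xg‖ ^ 2 = ‖xt - xprev‖ ^ 2 - 2 * ⟪xt - xprev, g⟫ + ‖g‖ ^ 2 := by
      rw [hxtg, norm_sub_sq_real]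
    have hi : ⟪xt - xprev, g⟫ = μ * ⟪r, M (xt - xprev)⟫ := by
      rw [hinner, real_inner_comm]
    rw [hF xt, hexp, hi]
    have hkey : (1/μ) * ((‖xt - xprev‖ ^ 2 - 2 * (μ * ⟪r, M (xt - xprev)⟫) + ‖g‖ ^ 2) - ‖g‖ ^ 2)
        = (1/μ) * ‖xt - xprev‖ ^ 2 - 2 * ⟪r, M (xt - xprev)⟫ := by
      field_simp; ring
    linarith [hripup, hkey]
  -- step 2: ‖xt - xg‖² ≤ C * ‖(x - xprev) - g‖²
  have hstep2 : ‖xt - xg‖ ^ 2 ≤ C * ‖(x - xprev) - g‖ ^ 2 := by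
    have h := hSnear xg x hx
    rw [← hxt] at h
    have h1 : ‖xt - xg‖ = ‖xg - xt‖ := norm_sub_rev _ _
    have h2 : ‖xg - x‖ = ‖(x - xprev) - g‖ := by
      rw [show xg - x = -((x - xprev) - g) by rw [hxg]; abel, norm_neg]
    rw [h1, ← h2]; exact h
  -- step 3: bound pieces
  have hgnorm : ‖g‖ ^ 2 ≤ μ ^ 2 * σ2 * ‖r‖ ^ 2 := by
    have h1 : ‖(ContinuousLinearMap.adjoint M) r‖ ≤ ‖M‖ * ‖r‖ := by
      calc ‖(ContinuousLinearMap.adjoint M) r‖ ≤ ‖ContinuousLinearMap.adjoint M‖ * ‖r‖ :=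
        ContinuousLinearMap.le_opNorm _ _
      _ = ‖M‖ * ‖r‖ := by rw [LinearIsometryEquiv.norm_map]
    have h3 : ‖μ‖ = μ := abs_of_pos hμ
    have h4 : ‖g‖ ≤ μ * (‖M‖ * ‖r‖) := by
      rw [hg, norm_smul, h3]
      exact mul_le_mul_of_nonneg_left h1 hμ.le
    calc ‖g‖ ^ 2 ≤ (μ * (‖M‖ * ‖r‖)) ^ 2 := pow_le_pow_left₀ (norm_nonneg g) h4 2
      _ = μ ^ 2 * ‖M‖ ^ 2 * ‖r‖ ^ 2 := by ring
      _ = μ ^ 2 * σ2 * ‖r‖ ^ 2 := by rw [hσ2]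
  have hinner2 : ⟪x - xprev, g⟫ = μ * ⟪r, r - e⟫ := by
    rw [real_inner_comm, ← hinner, hMxx]
  have hinner3 : 2 * ⟪r, r - e⟫ = ‖r‖ ^ 2 + ‖r - e‖ ^ 2 - ‖e‖ ^ 2 := by
    have h := norm_sub_sq_real r (r - e)
    have h2 : r - (r - e) = e := by abel
    rw [h2] at h
    linarith
  -- master inequality
  have hmaster : ‖y - M xt‖ ^ 2 ≤
      (1 - C + (C - 1) * μ * σ2) * ‖r‖ ^ 2 + C * ‖e‖ ^ 2 + C * a * ‖r - e‖ ^ 2 := by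
    have hexp2 : ‖(x - xprev) - g‖ ^ 2 = ‖x - xprev‖ ^ 2 - 2 * ⟪x - xprev, g⟫ + ‖g‖ ^ 2 :=
      norm_sub_sq_real _ _
    have hchain : ‖y - M xt‖ ^ 2 ≤ ‖r‖ ^ 2 + (1 / μ) *
        (C * (‖x - xprev‖ ^ 2 - 2 * ⟪x - xprev, g⟫ + ‖g‖ ^ 2) - ‖g‖ ^ 2) := by
      refine le_trans hstep1 ?_
      have hst := hstep2
      rw [hexp2] at hst
      have hμ' : 0 < 1 / μ := by positivity
      have hmono := mul_le_mul_of_nonneg_left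
        (show ‖xt - xg‖ ^ 2 - ‖g‖ ^ 2 ≤
          C * (‖x - xprev‖ ^ 2 - 2 * ⟪x - xprev, g⟫ + ‖g‖ ^ 2) - ‖g‖ ^ 2 by linarith)
        hμ'.le
      linarith only [hmono]
    -- now substitute pieces
    have hA : (1/μ) * C * ‖x - xprev‖ ^ 2 ≤ (1/μ) * (C / (1 - δ)) * ‖r - e‖ ^ 2 := by
      have hμ' : 0 < 1 / μ := by positivity
      have hC' : 0 ≤ C / (1 - δ) := by positivity
      have := hriplow
      have hCle : C * ‖x - xprev‖ ^ 2 ≤ (C / (1 - δ)) * ‖r - e‖ ^ 2 := by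
        rw [div_mul_eq_mul_div, le_div_iff₀ hδ']
        have := mul_le_mul_of_nonneg_left hriplow hC0.le
        linarith only [this]
      have := mul_le_mul_of_nonneg_left hCle hμ'.le
      linarith only [this]
    have hB : (1/μ) * (2 * C * ⟪x - xprev, g⟫) = C * (‖r‖ ^ 2 + ‖r - e‖ ^ 2 - ‖e‖ ^ 2) := by
      rw [hinner2]
      have : (1/μ) * (2 * C * (μ * ⟪r, r - e⟫)) = C * (2 * ⟪r, r - e⟫) := by
        field_simp
      rw [this, hinner3]
    have hD : (1/μ) * ((C - 1) * ‖g‖ ^ 2) ≤ (C - 1) * μ * σ2 * ‖r‖ ^ 2 := by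
      have h1 : 0 ≤ C - 1 := by linarith
      have h2 : (1/μ) * ((C - 1) * (μ^2 * σ2 * ‖r‖^2)) = (C - 1) * μ * σ2 * ‖r‖ ^ 2 := by
        field_simp
      have hμ' : 0 < 1 / μ := by positivity
      have := mul_le_mul_of_nonneg_left
        (mul_le_mul_of_nonneg_left hgnorm h1) hμ'.le
      linarith only [this, h2]
    have hEq : (1/μ) * (C / (1 - δ)) = C * a + C := by
      rw [ha]; field_simp; ring
    -- combine
    have hchain2 : ‖y - M xt‖ ^ 2 ≤ ‖r‖ ^ 2 + (1/μ) * C * ‖x - xprev‖ ^ 2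
        - (1/μ) * (2 * C * ⟪x - xprev, g⟫) + (1/μ) * ((C - 1) * ‖g‖ ^ 2) := by
      have : (1/μ) * (C * (‖x - xprev‖ ^ 2 - 2 * ⟪x - xprev, g⟫ + ‖g‖ ^ 2) - ‖g‖ ^ 2)
          = (1/μ) * C * ‖x - xprev‖ ^ 2 - (1/μ) * (2 * C * ⟪x - xprev, g⟫)
            + (1/μ) * ((C - 1) * ‖g‖ ^ 2) := by ring
      linarith only [this ▸ hchain]
    calc ‖y - M xt‖ ^ 2
        ≤ ‖r‖ ^ 2 + (1/μ) * (C / (1 - δ)) * ‖r - e‖ ^ 2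
          - C * (‖r‖ ^ 2 + ‖r - e‖ ^ 2 - ‖e‖ ^ 2) + (C - 1) * μ * σ2 * ‖r‖ ^ 2 := by
          rw [← hB]; linarith only [hchain2, hA, hD]
      _ = (1 - C + (C - 1) * μ * σ2) * ‖r‖ ^ 2 + C * ‖e‖ ^ 2 + C * a * ‖r - e‖ ^ 2 := by
          rw [show (1:ℝ)/μ * (C / (1 - δ)) * ‖r - e‖ ^ 2 = ((1/μ) * (C / (1-δ))) * ‖r-e‖^2 by ring,
            hEq]
          ring
  -- triangle inequality
  have htri : ‖r - e‖ ≤ ‖r‖ + ‖e‖ := norm_sub_le _ _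
  have hR0 : 0 ≤ ‖r‖ := norm_nonneg _
  have hE0 : 0 ≤ ‖e‖ := norm_nonneg _
  have htri2 : ‖r - e‖ ^ 2 ≤ (‖r‖ + ‖e‖) ^ 2 := pow_le_pow_left₀ (norm_nonneg _) htri 2
  have hmaster2 : ‖y - M xt‖ ^ 2 ≤
      (1 - C + (C - 1) * μ * σ2) * ‖r‖ ^ 2 + C * ‖e‖ ^ 2 + C * a * (‖r‖ + ‖e‖) ^ 2 := by
    have hCa' : 0 ≤ C * a := mul_nonneg (le_of_lt hC0) ha0
    have := mul_le_mul_of_nonneg_left htri2 hCa'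
    linarith only [this, hmaster]
  -- c₄ rewritten
  have hc₄' : c₄ = C * a * (1 + 1/η) ^ 2 + (C - 1) * (μ * σ2 - 1) + C / η ^ 2 := by
    rw [hc₄, ha, hσ2]; ring
  -- c₄ < 1
  have hb₁pos : 0 < b₁ := by rw [hb₁]; positivity
  have hb₁lt : b₁ < 1 := by
    rw [hb₁, div_lt_one (by linarith)]; linarith
  have hb₂0 : 0 ≤ b₂ := by
    have hσ2n : (0:ℝ) ≤ σ2 := hσ2 ▸ sq_nonneg _
    rw [hb₂]
    apply div_nonneg
    · exact mul_nonneg (mul_nonneg (by linarith) hσ2n) (sq_nonneg b₁)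
    · positivity
  have hc₄lt : c₄ < 1 := by
    set s : ℝ := Real.sqrt (1 - b₂ / b₁ ^ 2) with hs
    have harg : 0 ≤ 1 - b₂ / b₁ ^ 2 := by
      have : 0 ≤ b₂ / b₁ ^ 2 := by positivity
      linarith
    have hs0 : 0 ≤ s := Real.sqrt_nonneg _
    have hs2 : s ^ 2 = 1 - b₂ / b₁ ^ 2 := Real.sq_sqrt harg
    have hs1 : s ≤ 1 := Real.sqrt_le_one.2 (by linarith [div_nonneg hb₂0 (sq_nonneg b₁)])
    have hb₂eq : b₂ = b₁ ^ 2 * (1 - s ^ 2) := by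
      rw [hs2]
      field_simp
      ring
    set t : ℝ := 1 / μ with ht
    have htpos : 0 < t := by positivity
    have ht1 : 1 ≤ t := hμinv
    -- quadratic factorization
    have hfac1 : 0 < t - (1 - δ) * b₁ * (1 - s) := by
      have k1 : (1 - δ) * b₁ * (1 - s) ≤ (1 - δ) * b₁ :=
        mul_le_of_le_one_right (mul_nonneg hδ'.le hb₁pos.le) (by linarith)
      have k2 : (1 - δ) * b₁ ≤ b₁ :=
        mul_le_of_le_one_left hb₁pos.le (by linarith)
      linarith only [k1, k2, ht1, hb₁lt]
    have hfac2 : t - (1 - δ) * b₁ * (1 + s) < 0 := by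
      linarith only [hμ2]
    have hQ : t ^ 2 - 2 * b₁ * (1 - δ) * t + b₂ * (1 - δ) ^ 2 < 0 := by
      have hprod : (t - (1 - δ) * b₁ * (1 - s)) * (t - (1 - δ) * b₁ * (1 + s)) < 0 :=
        mul_neg_of_pos_of_neg hfac1 hfac2
      have hexpand : (t - (1 - δ) * b₁ * (1 - s)) * (t - (1 - δ) * b₁ * (1 + s))
          = t ^ 2 - 2 * b₁ * (1 - δ) * t + (b₁ ^ 2 * (1 - s ^ 2)) * (1 - δ) ^ 2 := by ring
      rw [← hb₂eq] at hexpand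
      linarith only [hexpand ▸ hprod]
    -- identity
    have hid : (c₄ - 1) * (b₁ ^ 2 * (1 - δ) * t) =
        C * (t ^ 2 - 2 * b₁ * (1 - δ) * t + b₂ * (1 - δ) ^ 2) := by
      rw [hc₄', hb₂, hb₁, ht, ha]
      have hη' : η ≠ 0 := ne_of_gt hη
      have hη1 : (1:ℝ) + η ≠ 0 := by positivity
      have hμ' : μ ≠ 0 := ne_of_gt hμ
      have hδ'' : (1:ℝ) - δ ≠ 0 := ne_of_gt hδ'
      have hC' : C ≠ 0 := ne_of_gt hC0
      field_simp
      ring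
    have hpos : 0 < b₁ ^ 2 * (1 - δ) * t := by positivity
    have hneg : (c₄ - 1) * (b₁ ^ 2 * (1 - δ) * t) < 0 := by
      rw [hid]; exact mul_neg_of_pos_of_neg hC0 hQ
    by_contra hcon
    push_neg at hcon
    have : 0 ≤ (c₄ - 1) * (b₁ ^ 2 * (1 - δ) * t) :=
      mul_nonneg (by linarith only [hcon]) hpos.le
    linarith only [this, hneg]
  refine ⟨?_, ?_, hc₄lt⟩
  · -- case 1
    intro hcase
    have hRle : ‖r‖ ≤ η * ‖e‖ := by
      have hsq : ‖r‖ ^ 2 ≤ (η * ‖e‖) ^ 2 := by rw [mul_pow]; exact hcase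
      exact le_of_pow_le_pow_left₀ two_ne_zero (by positivity) hsq
    have hK : 0 ≤ 1 - C + (C - 1) * μ * σ2 := by
      calc (0:ℝ) ≤ (C - 1) * (μ * σ2 - 1) :=
            mul_nonneg (by linarith) (by linarith)
        _ = 1 - C + (C - 1) * μ * σ2 := by ring
    have hCa : 0 ≤ C * a := mul_nonneg (le_of_lt hC0) ha0
    have hup : ‖y - M xt‖ ^ 2 ≤ c₄ * (η ^ 2 * ‖e‖ ^ 2) := by
      have h1 : (1 - C + (C - 1) * μ * σ2) * ‖r‖ ^ 2 ≤
          (1 - C + (C - 1) * μ * σ2) * (η * ‖e‖) ^ 2 :=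
        mul_le_mul_of_nonneg_left (pow_le_pow_left₀ hR0 hRle 2) hK
      have h2 : C * a * (‖r‖ + ‖e‖) ^ 2 ≤ C * a * (η * ‖e‖ + ‖e‖) ^ 2 :=
        mul_le_mul_of_nonneg_left
          (pow_le_pow_left₀ (by positivity) (by linarith) 2) hCa
      have hiden : (1 - C + (C - 1) * μ * σ2) * (η * ‖e‖) ^ 2 + C * ‖e‖ ^ 2
          + C * a * (η * ‖e‖ + ‖e‖) ^ 2 = c₄ * (η ^ 2 * ‖e‖ ^ 2) := by
        rw [hc₄']
        field_simp
        ring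
      linarith only [hmaster2, h1, h2, hiden]
    have h3 : c₄ * (η ^ 2 * ‖e‖ ^ 2) ≤ 1 * (η ^ 2 * ‖e‖ ^ 2) :=
      mul_le_mul_of_nonneg_right hc₄lt.le (by positivity)
    linarith only [hup, h3]
  · -- case 2
    intro hcase
    have hElt : η * ‖e‖ < ‖r‖ := by
      have hsq : (η * ‖e‖) ^ 2 < ‖r‖ ^ 2 := by rw [mul_pow]; exact hcase
      exact lt_of_pow_lt_pow_left₀ 2 hR0 hsq
    have hElt2 : ‖e‖ < ‖r‖ / η := by
      rw [lt_div_iff₀ hη]; linarith only [hElt, mul_comm η ‖e‖]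
    have hCa : 0 ≤ C * a := mul_nonneg (le_of_lt hC0) ha0
    have h1 : C * ‖e‖^2 ≤ C * (‖r‖/η)^2 :=
      mul_le_mul_of_nonneg_left (pow_le_pow_left₀ hE0 hElt2.le 2) hC0.le
    have h2 : C * a * (‖r‖ + ‖e‖)^2 ≤ C * a * (‖r‖ + ‖r‖/η)^2 :=
      mul_le_mul_of_nonneg_left
        (pow_le_pow_left₀ (by positivity) (by linarith only [hElt2.le]) 2) hCa
    have hiden : (1 - C + (C - 1) * μ * σ2) * ‖r‖ ^ 2 + C * (‖r‖/η) ^ 2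
        + C * a * (‖r‖ + ‖r‖/η) ^ 2 = c₄ * ‖r‖ ^ 2 := by
      rw [hc₄']
      field_simp
      ring
    linarith only [hmaster2, h1, h2, hiden]
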